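/- Let Σ be a finite alphabet and let x and y be nonempty words over Σ. The language L_{x<y} = {z ∈ Σ* : |z|_x < |z|_y} is regular if and only if x is interlaced by y or y is interlaced by x. -/

import Mathlib

set_option linter.unusedSectionVars false
set_option linter.unusedVariables false
set_option maxHeartbeats 1000000

/-- Number of (possibly overlapping) occurrences of `x` as a contiguous
subword (factor) of `z`. -/
def occCount {α : Type*} [DecidableEq α] (x z : List α) : ℕ :=
  ((List.range (z.length + 1)).filter (fun i => decide (x <+: z.drop i))).length

/-- `wpow w n` is the word `w` concatenated with itself `n` times. -/
def wpow {α : Type*} (w : List α) (n : ℕ) : List α := (List.replicate n w).flatten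

/-- `z` is `y`-bordered: `z ≠ y` and `y` is both a prefix and a suffix of `z`. -/
def IsBordered {α : Type*} (y z : List α) : Prop := z ≠ y ∧ y <+: z ∧ y <:+ z

/-- `x` is interlaced by `y`: `y` is a subword (factor) of every `x`-bordered word. -/
def InterlacedBy {α : Type*} (x y : List α) : Prop :=
  ∀ z : List α, IsBordered x z → y <:+: z

namespace Aux
variable {α : Type*} [DecidableEq α]

theorem occ_window {x u : List α} {i : ℕ} (h : x <+: u.drop i) :
    x = (u.drop i).take x.length := List.prefix_iff_eq_take.1 h

theorem infix_of_nested {x y u : List α} {j q : ℕ}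
    (hxj : x <+: u.drop j) (hyq : y <+: u.drop q)
    (h1 : j ≤ q) (h2 : q + y.length ≤ j + x.length) : y <:+: x := by
  have hx := occ_window hxj
  have hy := occ_window hyq
  have hd : u.drop q = (u.drop j).drop (q - j) := by
    rw [List.drop_drop]; congr 1; omega
  rw [hd] at hy
  have hlen : y.length ≤ x.length - (q - j) := by
    have := hxj.length_le
    omega
  have key : (x.drop (q - j)).take y.length = y := by
    conv_lhs => rw [hx]
    rw [List.drop_take, List.take_take, min_eq_left hlen]
    exact hy.symm
  have h1' : (x.drop (q-j)).take y.length <+: x.drop (q-j) := List.take_prefix _ _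
  have h2' : x.drop (q-j) <:+ x := List.drop_suffix _ _
  rw [key] at h1'
  exact h1'.isInfix.trans h2'.isInfix

theorem occ_of_infix {x y u : List α} {i : ℕ} (hxi : x <+: u.drop i)
    (hinf : y <:+: x) : ∃ o, o + y.length ≤ x.length ∧ y <+: u.drop (i + o) := by
  obtain ⟨s, t, hst⟩ := hinf
  refine ⟨s.length, ?_, ?_⟩
  · have := congrArg List.length hst
    simp only [List.length_append] at this
    omega
  · obtain ⟨w, hw⟩ := hxi
    have hd : u.drop (i + s.length) = (u.drop i).drop s.length := by
      rw [List.drop_drop, Nat.add_comm]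
    rw [hd, ← hw, ← hst]
    have ha : s ++ y ++ t ++ w = s ++ (y ++ (t ++ w)) := by simp [List.append_assoc]
    rw [ha, List.drop_left]
    exact ⟨t ++ w, rfl⟩

def occSet (x u : List α) : Finset ℕ :=
  (Finset.range (u.length + 1)).filter (fun i => x <+: u.drop i)

theorem occCount_eq (x u : List α) : occCount x u = (occSet x u).card := rfl

theorem occ_mem_iff {x u : List α} (hx : x ≠ []) {i : ℕ} :
    i ∈ occSet x u ↔ x <+: u.drop i := by
  simp only [occSet, Finset.mem_filter, Finset.mem_range, and_iff_right_iff_imp]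
  intro h
  have h1 : x.length ≤ (u.drop i).length := h.length_le
  have h2 : 0 < x.length := List.length_pos_iff.2 hx
  simp only [List.length_drop] at h1
  omega

theorem occ_bound {x u : List α} (hx : x ≠ []) {i : ℕ} (h : i ∈ occSet x u) :
    i + x.length ≤ u.length := by
  have hmem := h
  rw [occ_mem_iff hx] at h
  have h1 : x.length ≤ (u.drop i).length := h.length_le
  have h2 : 0 < x.length := List.length_pos_iff.2 hx
  simp only [List.length_drop] at h1
  omega

theorem occ_left_iff {x z w : List α} {i : ℕ} (him : i + x.length ≤ z.length) :
    x <+: (z ++ w).drop i ↔ x <+: z.drop i := by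
  rw [List.drop_append_of_le_length (by omega), List.prefix_iff_eq_take,
    List.prefix_iff_eq_take, List.take_append_of_le_length (by simp; omega)]

theorem occ_right_iff {x z w : List α} {i : ℕ} (hge : z.length ≤ i) :
    x <+: (z ++ w).drop i ↔ x <+: w.drop (i - z.length) := by
  rw [List.drop_append]
  have : z.drop i = [] := by simp; omega
  rw [this, List.nil_append]

def newOcc (x u : List α) (c : ℕ) : Finset ℕ :=
  (occSet x u).filter (fun i => c < i + x.length)

theorem occ_split {x : List α} (hx : x ≠ []) (z w : List α) :
    occCount x (z ++ w) = occCount x z + (newOcc x (z ++ w) z.length).card := by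
  rw [occCount_eq, occCount_eq]
  have : occSet x z = (occSet x (z ++ w)).filter (fun i => ¬ z.length < i + x.length) := by
    ext i
    simp only [Finset.mem_filter, not_lt]
    constructor
    · intro h
      have hb := occ_bound hx h
      rw [occ_mem_iff hx] at h ⊢
      exact ⟨(occ_left_iff hb).2 h, hb⟩
    · rintro ⟨h, hb⟩
      rw [occ_mem_iff hx] at h ⊢
      exact (occ_left_iff hb).1 h
  rw [this, newOcc]
  rw [add_comm]
  exact (Finset.card_filter_add_card_filter_not _).symm

theorem occCount_append_singleton {x : List α} (hx : x ≠ []) (z : List α) (a : α) :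
    occCount x (z ++ [a]) = occCount x z + if x <:+ z ++ [a] then 1 else 0 := by
  rw [occ_split hx z [a]]
  congr 1
  have hkey : newOcc x (z ++ [a]) z.length
      = if x <:+ z ++ [a] then {z.length + 1 - x.length} else ∅ := by
    ext i
    simp only [newOcc, Finset.mem_filter]
    constructor
    · rintro ⟨h, hlt⟩
      have hb := occ_bound hx h
      rw [occ_mem_iff hx] at h
      simp only [List.length_append, List.length_singleton] at hb
      have hi : i = z.length + 1 - x.length := by omega
      have hsuf : x <:+ z ++ [a] := by
        have := occ_window h
        rw [List.take_of_length_le (by simp [List.length_drop]; omega)] at this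
        rw [this]
        exact List.drop_suffix _ _
      simp [hsuf, hi]
    · intro hmem
      by_cases hsuf : x <:+ z ++ [a]
      · simp only [if_pos hsuf, Finset.mem_singleton] at hmem
        subst hmem
        have hlen : x.length ≤ (z ++ [a]).length := hsuf.length_le
        simp only [List.length_append, List.length_singleton] at hlen
        constructor
        · rw [occ_mem_iff hx]
          obtain ⟨t, ht⟩ := hsuf
          have : (z ++ [a]).drop (z.length + 1 - x.length) = x := by
            conv_lhs => rw [← ht]
            rw [List.drop_append]
            have h1 : t.drop (z.length + 1 - x.length) = [] := by
              have := congrArg List.length ht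
              simp at this ⊢
              omega
            rw [h1, List.nil_append]
            have h2 : z.length + 1 - x.length - t.length = 0 := by
              have := congrArg List.length ht
              simp at this
              omega
            rw [h2, List.drop_zero]
          rw [this]
        · have : 0 < x.length := List.length_pos_iff.2 hx
          omega
      · simp [hsuf] at hmem
  rw [hkey]
  split
  · simp
  · simp

theorem occCount_prefix_le {x : List α} (hx : x ≠ []) (z w : List α) :
    occCount x z ≤ occCount x (z ++ w) := by
  rw [occ_split hx z w]; omega

theorem occCount_suffix_le {x : List α} (hx : x ≠ []) (z w : List α) :
    occCount x w ≤ occCount x (z ++ w) := by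
  rw [occCount_eq, occCount_eq]
  apply Finset.card_le_card_of_injOn (fun i => z.length + i)
  · intro i hi
    simp only [Finset.mem_coe] at hi ⊢
    rw [occ_mem_iff hx] at hi ⊢
    rw [occ_right_iff (by omega)]
    simpa using hi
  · intro a _ b _ h
    simpa using h

theorem occCount_append_ge {x : List α} (hx : x ≠ []) (z w : List α) :
    occCount x z + occCount x w ≤ occCount x (z ++ w) := by
  rw [occCount_eq, occCount_eq, occCount_eq]
  have himg : (occSet x w).card = ((occSet x w).image (fun i => z.length + i)).card :=
    (Finset.card_image_of_injective _ (add_right_injective z.length)).symm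
  rw [himg, ← Finset.card_union_of_disjoint]
  · apply Finset.card_le_card
    intro i hi
    rcases Finset.mem_union.1 hi with h | h
    · have hb := occ_bound hx h
      rw [occ_mem_iff hx] at h ⊢
      exact (occ_left_iff hb).2 h
    · obtain ⟨j, hj, rfl⟩ := Finset.mem_image.1 h
      rw [occ_mem_iff hx] at hj ⊢
      rw [occ_right_iff (by omega)]
      simpa using hj
  · rw [Finset.disjoint_left]
    intro i hi hi2
    have hb := occ_bound hx hi
    obtain ⟨j, hj, rfl⟩ := Finset.mem_image.1 hi2
    have : 0 < x.length := List.length_pos_iff.2 hx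
    omega

theorem occCount_append_le {x : List α} (hx : x ≠ []) (z w : List α) :
    occCount x (z ++ w) ≤ occCount x z + occCount x w + x.length := by
  rw [occCount_eq, occCount_eq, occCount_eq]
  have hsub : occSet x (z ++ w) ⊆
      (occSet x z ∪ (occSet x w).image (fun i => z.length + i)) ∪
        Finset.Ico (z.length + 1 - x.length) z.length := by
    intro i hi
    rw [occ_mem_iff hx] at hi
    rcases le_or_gt (i + x.length) z.length with hb | hb
    · exact Finset.mem_union_left _ (Finset.mem_union_left _
        ((occ_mem_iff hx).2 ((occ_left_iff hb).1 hi)))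
    · rcases le_or_gt z.length i with hge | hlt
      · refine Finset.mem_union_left _ (Finset.mem_union_right _ ?_)
        refine Finset.mem_image.2 ⟨i - z.length, ?_, by omega⟩
        rw [occ_mem_iff hx]
        exact (occ_right_iff hge).1 hi
      · exact Finset.mem_union_right _ (Finset.mem_Ico.2 (by omega))
  calc (occSet x (z ++ w)).card ≤ _ := Finset.card_le_card hsub
    _ ≤ ((occSet x z ∪ (occSet x w).image (fun i => z.length + i)).card)
        + (Finset.Ico (z.length + 1 - x.length) z.length).card := Finset.card_union_le _ _
    _ ≤ ((occSet x z).card + ((occSet x w).image (fun i => z.length + i)).card)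
        + (Finset.Ico (z.length + 1 - x.length) z.length).card := by
          have := Finset.card_union_le (occSet x z) ((occSet x w).image (fun i => z.length + i))
          omega
    _ ≤ (occSet x z).card + (occSet x w).card + x.length := by
          have h1 := Finset.card_image_le (f := fun i => z.length + i) (s := occSet x w)
          have h2 : (Finset.Ico (z.length + 1 - x.length) z.length).card ≤ x.length := by
            rw [Nat.card_Ico]
            omega
          omega

theorem prefix_inner {y s t v L : List α} (hv : v <+: L) (hst : s ++ y ++ t = v) :
    y <+: L.drop s.length := by
  obtain ⟨w, hw⟩ := hv
  rw [← hw, ← hst]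
  have ha : s ++ y ++ t ++ w = s ++ (y ++ (t ++ w)) := by simp [List.append_assoc]
  rw [ha, List.drop_left]
  exact ⟨t ++ w, rfl⟩

theorem occ_of_infix' {x y u s t : List α} {i : ℕ} (hxi : x <+: u.drop i)
    (hst : s ++ y ++ t = x) : y <+: u.drop (i + s.length) := by
  have hd : u.drop (i + s.length) = (u.drop i).drop s.length := by
    rw [List.drop_drop, Nat.add_comm]
  rw [hd]
  exact prefix_inner hxi hst

theorem exists_y_between {x y : List α} (hx : x ≠ []) (h : InterlacedBy x y)
    {u : List α} {i j : ℕ} (hi : x <+: u.drop i) (hj : x <+: u.drop j)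
    (hij : i < j) (hjb : j + x.length ≤ u.length) :
    ∃ q, y <+: u.drop q ∧ i ≤ q ∧ q + y.length ≤ j + x.length := by
  set u' := (u.drop i).take (j + x.length - i) with hu'
  have hlenu' : u'.length = j + x.length - i := by
    simp [hu', List.length_take, List.length_drop]
    omega
  have hpre : x <+: u' := by
    rw [List.prefix_iff_eq_take, hu', List.take_take, min_eq_left (by omega)]
    exact occ_window hi
  have hsuf : x <:+ u' := by
    have hkey : u'.drop (j - i) = x := by
      rw [hu', List.drop_take, List.drop_drop]
      have h1 : i + (j - i) = j := by omega
      have h2 : j + x.length - i - (j - i) = x.length := by omega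
      rw [h1, h2]
      exact (occ_window hj).symm
    rw [← hkey]
    exact List.drop_suffix _ _
  have hne : u' ≠ x := by
    intro hc
    have := congrArg List.length hc
    rw [hlenu'] at this
    omega
  obtain ⟨s, t, hst⟩ := h u' ⟨hne, hpre, hsuf⟩
  refine ⟨i + s.length, ?_, by omega, ?_⟩
  · have hpu : u' <+: u.drop i := List.take_prefix _ _
    exact occ_of_infix' hpu hst
  · have := congrArg List.length hst
    simp only [List.length_append, hlenu'] at this
    omega

theorem newOcc_card_le {x y : List α} (hx : x ≠ []) (hy : y ≠ [])
    (h : InterlacedBy x y) (u : List α) (c : ℕ) :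
    (newOcc x u c).card ≤ (newOcc y u c).card + (x.length + 1) := by
  classical
  by_cases hinf : y <:+: x
  · -- Case A : y is a factor of x
    obtain ⟨s, t, hst⟩ := hinf
    have hon : s.length + y.length ≤ x.length := by
      have := congrArg List.length hst
      simp only [List.length_append] at this
      omega
    have hmaps : ∀ i ∈ newOcc x u c, i + s.length ∈ occSet y u := by
      intro i hi
      have hx' : x <+: u.drop i := (occ_mem_iff hx).1 (Finset.mem_of_mem_filter i hi)
      exact (occ_mem_iff hy).2 (occ_of_infix' hx' hst)
    set good := (newOcc x u c).filter (fun i => c < i + s.length + y.length) with hgood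
    have h1 : (newOcc x u c).card ≤ good.card + x.length := by
      have hsub : newOcc x u c ⊆
          good ∪ Finset.Ico (c + 1 - x.length) (c + 1 - (s.length + y.length)) := by
        intro i hi
        by_cases hc : c < i + s.length + y.length
        · exact Finset.mem_union_left _ (Finset.mem_filter.2 ⟨hi, hc⟩)
        · have hnewi : c < i + x.length := (Finset.mem_filter.1 hi).2
          push_neg at hc
          exact Finset.mem_union_right _ (Finset.mem_Ico.2 ⟨by omega, by omega⟩)
      calc (newOcc x u c).card ≤ _ := Finset.card_le_card hsub
        _ ≤ good.card + (Finset.Ico (c + 1 - x.length) (c + 1 - (s.length + y.length))).card :=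
            Finset.card_union_le _ _
        _ ≤ good.card + x.length := by rw [Nat.card_Ico]; omega
    have h2 : good.card ≤ (newOcc y u c).card := by
      apply Finset.card_le_card_of_injOn (fun i => i + s.length)
      · intro i hi
        have hi' := Finset.mem_filter.1 hi
        refine Finset.mem_filter.2 ⟨hmaps i hi'.1, by show c < i + s.length + y.length; omega⟩
      · intro a _ b _ hab
        simpa using hab
    omega
  · -- Case B : y is not a factor of x
    set S := newOcc x u c with hS
    have hSx : S ⊆ occSet x u := Finset.filter_subset _ _
    set S' := S.filter (fun i => ¬ ∀ j ∈ occSet x u, j ≤ i) with hS'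
    have hsplit : S.card ≤ S'.card + 1 := by
      have hb1 : (S.filter (fun i => ∀ j ∈ occSet x u, j ≤ i)).card ≤ 1 := by
        rw [Finset.card_le_one]
        intro a ha b hb
        simp only [Finset.mem_filter] at ha hb
        have h1 := ha.2 b (hSx hb.1)
        have h2 := hb.2 a (hSx ha.1)
        omega
      have hsub : S ⊆ S' ∪ S.filter (fun i => ∀ j ∈ occSet x u, j ≤ i) := by
        intro i hi
        by_cases hp : ∀ j ∈ occSet x u, j ≤ i
        · exact Finset.mem_union_right _ (Finset.mem_filter.2 ⟨hi, hp⟩)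
        · exact Finset.mem_union_left _ (Finset.mem_filter.2 ⟨hi, hp⟩)
      calc S.card ≤ _ := Finset.card_le_card hsub
        _ ≤ S'.card + (S.filter (fun i => ∀ j ∈ occSet x u, j ≤ i)).card :=
            Finset.card_union_le _ _
        _ ≤ S'.card + 1 := by omega
    set qf : ℕ → ℕ := fun i =>
      if hne : ((occSet y u).filter (fun q => i ≤ q)).Nonempty
      then ((occSet y u).filter (fun q => i ≤ q)).min' hne else 0 with hqf
    have main : ∀ i ∈ S', i ≤ qf i ∧ qf i ∈ occSet y u ∧
        ∀ j' ∈ occSet x u, i < j' → qf i + y.length ≤ j' + x.length := by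
      intro i hi
      simp only [hS', Finset.mem_filter] at hi
      obtain ⟨hiS, hnext⟩ := hi
      push_neg at hnext
      obtain ⟨j0, hj0occ, hj0gt⟩ := hnext
      obtain ⟨j, hjocc, hij, hjmin⟩ :
          ∃ j, j ∈ occSet x u ∧ i < j ∧ ∀ j' ∈ occSet x u, i < j' → j ≤ j' := by
        have hTne : ((occSet x u).filter (fun j => i < j)).Nonempty :=
          ⟨j0, Finset.mem_filter.2 ⟨hj0occ, hj0gt⟩⟩
        have hmem := Finset.min'_mem _ hTne
        rw [Finset.mem_filter] at hmem
        exact ⟨_, hmem.1, hmem.2, fun j' hj' hij' =>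
          Finset.min'_le _ j' (Finset.mem_filter.2 ⟨hj', hij'⟩)⟩
      obtain ⟨q0, hq0occ, hq0ge, hq0le⟩ := exists_y_between hx h
        ((occ_mem_iff hx).1 (hSx hiS)) ((occ_mem_iff hx).1 hjocc) hij (occ_bound hx hjocc)
      have hq0mem : q0 ∈ (occSet y u).filter (fun q => i ≤ q) :=
        Finset.mem_filter.2 ⟨(occ_mem_iff hy).2 hq0occ, hq0ge⟩
      have hne : ((occSet y u).filter (fun q => i ≤ q)).Nonempty := ⟨q0, hq0mem⟩
      have hqfeq : qf i = ((occSet y u).filter (fun q => i ≤ q)).min' hne := by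
        simp only [hqf, dif_pos hne]
      have hqmem := Finset.min'_mem _ hne
      rw [← hqfeq, Finset.mem_filter] at hqmem
      refine ⟨hqmem.2, hqmem.1, ?_⟩
      intro j' hj' hij'
      have hle : qf i ≤ q0 := by
        rw [hqfeq]
        exact Finset.min'_le _ _ hq0mem
      have hjj := hjmin j' hj' hij'
      omega
    have key : ∀ a ∈ S', ∀ b ∈ S', a < b → qf a = qf b → False := by
      intro a ha b hb hlt hab
      obtain ⟨ha1, ha2, ha3⟩ := main a ha
      have hbocc : b ∈ occSet x u := hSx (Finset.mem_of_mem_filter b hb)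
      obtain ⟨hb1, hb2, hb3⟩ := main b hb
      have h3 := ha3 b hbocc hlt
      rw [hab] at ha1 ha2 h3
      exact hinf (infix_of_nested ((occ_mem_iff hx).1 hbocc) ((occ_mem_iff hy).1 ha2) hb1 h3)
    have hinj : Set.InjOn qf S' := by
      intro a ha b hb hab
      by_contra hne
      rcases lt_trichotomy a b with hlt | heq | hlt
      · exact key a ha b hb hlt hab
      · exact hne heq
      · exact key b hb a ha hlt hab.symm
    set good := S'.filter (fun i => c < qf i + y.length) with hgood2
    set bad := S'.filter (fun i => ¬ c < qf i + y.length) with hbad2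
    have hsub2 : S' ⊆ good ∪ bad := by
      intro i hi
      by_cases hp : c < qf i + y.length
      · exact Finset.mem_union_left _ (Finset.mem_filter.2 ⟨hi, hp⟩)
      · exact Finset.mem_union_right _ (Finset.mem_filter.2 ⟨hi, hp⟩)
    have hgb : S'.card ≤ good.card + bad.card :=
      le_trans (Finset.card_le_card hsub2) (Finset.card_union_le _ _)
    have hgoodle : good.card ≤ (newOcc y u c).card := by
      apply Finset.card_le_card_of_injOn qf
      · intro i hi
        have hi' := Finset.mem_filter.1 hi
        obtain ⟨h1, h2, _⟩ := main i hi'.1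
        exact Finset.mem_filter.2 ⟨h2, hi'.2⟩
      · intro a ha b hb hab
        exact hinj (Finset.mem_coe.2 (Finset.mem_of_mem_filter a (Finset.mem_coe.1 ha)))
          (Finset.mem_coe.2 (Finset.mem_of_mem_filter b (Finset.mem_coe.1 hb))) hab
    have hbadle : bad.card ≤ x.length := by
      have hcard : bad.card ≤ (Finset.Ico (c + 1 - x.length) (c + 1 - y.length)).card := by
        apply Finset.card_le_card_of_injOn qf
        · intro i hi
          have hi' := Finset.mem_filter.1 hi
          obtain ⟨h1, _, _⟩ := main i hi'.1
          have hiS : i ∈ S := Finset.mem_of_mem_filter i hi'.1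
          have hnew : c < i + x.length := (Finset.mem_filter.1 hiS).2
          have hold : ¬ c < qf i + y.length := hi'.2
          exact Finset.mem_Ico.2 ⟨by omega, by omega⟩
        · intro a ha b hb hab
          exact hinj (Finset.mem_coe.2 (Finset.mem_of_mem_filter a (Finset.mem_coe.1 ha)))
            (Finset.mem_coe.2 (Finset.mem_of_mem_filter b (Finset.mem_coe.1 hb))) hab
      rw [Nat.card_Ico] at hcard
      have hy1 : 1 ≤ y.length := List.length_pos_iff.2 hy
      omega
    omega
/-! ### Buffers (last `K` letters) -/

def buf (K : ℕ) (z : List α) : List α := z.drop (z.length - K)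

theorem buf_length_le (K : ℕ) (z : List α) : (buf K z).length ≤ K := by
  simp [buf]; omega

theorem buf_suffix (K : ℕ) (z : List α) : buf K z <:+ z := List.drop_suffix _ _

theorem buf_eq_of_le {K : ℕ} {z : List α} (h : z.length ≤ K) : buf K z = z := by
  unfold buf
  rw [Nat.sub_eq_zero_of_le h, List.drop_zero]

def bufUpd (K : ℕ) (b : List α) (a : α) : List α := (b ++ [a]).drop (b.length + 1 - K)

theorem bufUpd_length_le {K : ℕ} {b : List α} (hb : b.length ≤ K) (a : α) :
    (bufUpd K b a).length ≤ K := by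
  simp [bufUpd]; omega

theorem buf_append_singleton (K : ℕ) (z : List α) (a : α) :
    buf K (z ++ [a]) = bufUpd K (buf K z) a := by
  rcases le_or_gt (z.length + 1) K with hle | hlt
  · rw [buf_eq_of_le (by simp; omega), buf_eq_of_le (by omega), bufUpd]
    have : z.length + 1 - K = 0 := by omega
    rw [this, List.drop_zero]
  · have hlen : (buf K z).length = K := by simp [buf]; omega
    rw [bufUpd, hlen, buf, buf]
    have h1 : (z ++ [a]).length - K = (z.length - K) + (K + 1 - K) := by simp; omega
    rw [h1, ← List.drop_drop]
    congr 1
    rw [List.drop_append_of_le_length (by omega)]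

theorem suffix_buf_iff {K : ℕ} {w z : List α} (a : α) (hw : w.length ≤ K) :
    w <:+ z ++ [a] ↔ w <:+ buf K z ++ [a] := by
  rcases le_or_gt z.length K with hle | hlt
  · rw [buf_eq_of_le hle]
  · have hsuf : buf K z ++ [a] <:+ z ++ [a] := by
      obtain ⟨t, ht⟩ := buf_suffix K z
      exact ⟨t, by rw [← List.append_assoc, ht]⟩
    constructor
    · intro hs
      have h1 : w.reverse <+: (z ++ [a]).reverse := List.reverse_prefix.2 hs
      have h2 : (buf K z ++ [a]).reverse <+: (z ++ [a]).reverse := List.reverse_prefix.2 hsuf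
      have h3 : w.reverse <+: (buf K z ++ [a]).reverse := by
        apply List.prefix_of_prefix_length_le h1 h2
        simp [buf]
        omega
      exact List.reverse_prefix.1 (by simpa using h3)
    · intro hs
      exact hs.trans hsuf

theorem regular_of_bounded_drop {β : Type} [Fintype β] [DecidableEq β]
    (φ : List β → ℤ) (K : ℕ) (δ : List β → β → ℤ) (init C : ℤ)
    (hinit : φ [] = init) (hinit0 : 0 ≤ init) (hC : 0 ≤ C)
    (hstep : ∀ z a, φ (z ++ [a]) = φ z + δ (buf K z) a)
    (hdrop : ∀ z w, φ z - C ≤ φ (z ++ w)) :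
    Language.IsRegular {z : List β | 0 < φ z} := by
  classical
  have hfinBuf : Fintype {l : List β // l.length ≤ K} := by
    apply Fintype.ofInjective (fun l : {l : List β // l.length ≤ K} =>
      (fun i : Fin (K+1) => l.1[(i : ℕ)]? : Fin (K+1) → Option β))
    intro a b h
    ext1
    apply List.ext_getElem?
    intro i
    rcases lt_or_ge i (K+1) with hi | hi
    · exact congr_fun h ⟨i, hi⟩
    · have ha : a.1.length ≤ i := by have := a.2; omega
      have hb : b.1.length ≤ i := by have := b.2; omega
      rw [List.getElem?_eq_none ha, List.getElem?_eq_none hb]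
  set B : ℤ := init + C + 1 with hB
  set σ := ({l : List β // l.length ≤ K} × {v : ℤ // v ∈ Finset.Icc (init - C) B}) with hσ
  have hfinσ : Fintype σ := by
    exact instFintypeProd _ _
  let stepf : σ → β → σ := fun s a =>
    ⟨⟨bufUpd K s.1.1 a, bufUpd_length_le s.1.2 a⟩,
     ⟨if s.2.1 = B then B else max (init - C) (min (s.2.1 + δ s.1.1 a) B), by
        by_cases h : s.2.1 = B
        · simp only [if_pos h, Finset.mem_Icc]
          omega
        · simp only [if_neg h, Finset.mem_Icc]
          omega⟩⟩
  let M : DFA β σ :=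
    ⟨stepf, ⟨⟨[], by simp⟩, ⟨init, by simp only [Finset.mem_Icc]; omega⟩⟩,
     {s | 0 < s.2.1}⟩
  have inv : ∀ z : List β, (M.eval z).1.1 = buf K z ∧
      (((∃ p, p <+: z ∧ B ≤ φ p) ∧ (M.eval z).2.1 = B) ∨
       ((∀ p, p <+: z → φ p < B) ∧ (M.eval z).2.1 = φ z)) := by
    intro z
    induction z using List.reverseRecOn with
    | nil =>
      constructor
      · show ([] : List β) = buf K []
        simp [buf]
      · right
        constructor
        · intro p hp
          rw [List.prefix_nil.1 hp, hinit]
          omega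
        · show init = φ []
          rw [hinit]
    | append_singleton z a ih =>
      rw [DFA.eval_append_singleton]
      obtain ⟨ihb, ihc⟩ := ih
      have hstep1 : (M.step (M.eval z) a).1.1 = bufUpd K (M.eval z).1.1 a := rfl
      have hstep2 : (M.step (M.eval z) a).2.1 =
          if (M.eval z).2.1 = B then B
          else max (init - C) (min ((M.eval z).2.1 + δ (M.eval z).1.1 a) B) := rfl
      constructor
      · rw [hstep1, ihb, buf_append_singleton]
      · rcases ihc with ⟨⟨p, hp, hpB⟩, hval⟩ | ⟨hall, hval⟩
        · left
          refine ⟨⟨p, hp.trans (z.prefix_append [a]), hpB⟩, ?_⟩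
          rw [hstep2, hval, if_pos rfl]
        · have hne : (M.eval z).2.1 ≠ B := by
            rw [hval]
            have := hall z (List.prefix_refl z)
            omega
          have hφa : φ (z ++ [a]) = (M.eval z).2.1 + δ (M.eval z).1.1 a := by
            rw [hval, ihb, hstep]
          by_cases hbig : B ≤ φ (z ++ [a])
          · left
            refine ⟨⟨z ++ [a], List.prefix_refl _, hbig⟩, ?_⟩
            rw [hstep2, if_neg hne, ← hφa]
            omega
          · right
            push_neg at hbig
            constructor
            · intro p hp
              rcases List.prefix_concat_iff.1 hp with rfl | hp'
              · exact hbig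
              · exact hall p hp'
            · rw [hstep2, if_neg hne, ← hφa]
              have hlow : init - C ≤ φ (z ++ [a]) := by
                have := hdrop [] (z ++ [a])
                rw [List.nil_append, hinit] at this
                omega
              omega
  refine ⟨σ, hfinσ, M, ?_⟩
  ext z
  rw [DFA.mem_accepts]
  show (M.eval z) ∈ {s : σ | 0 < s.2.1} ↔ 0 < φ z
  rw [Set.mem_setOf_eq]
  rcases (inv z).2 with ⟨⟨p, hp, hpB⟩, hval⟩ | ⟨hall, hval⟩
  · rw [hval]
    obtain ⟨w, rfl⟩ := hp
    have := hdrop p w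
    constructor
    · intro _
      omega
    · intro _
      omega
  · rw [hval]

theorem occCount_nil {x : List α} (hx : x ≠ []) : occCount x [] = 0 := by
  simp [occCount, List.prefix_nil, hx]

theorem diff_drop_bound {x y : List α} (hx : x ≠ []) (hy : y ≠ [])
    (h : InterlacedBy x y) (z w : List α) :
    ((occCount y z : ℤ) - occCount x z) - (x.length + 1)
      ≤ (occCount y (z ++ w) : ℤ) - occCount x (z ++ w) := by
  have hxs := occ_split hx z w
  have hys := occ_split hy z w
  have hkey := newOcc_card_le hx hy h (z ++ w) z.length
  push_cast [hxs, hys]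
  push_cast at hkey
  omega

theorem regular_of_interlaced {α : Type} [Fintype α] [DecidableEq α]
    {x y : List α} (hx : x ≠ []) (hy : y ≠ []) (h : InterlacedBy x y) :
    Language.IsRegular {z : List α | 0 < (occCount y z : ℤ) - occCount x z} := by
  classical
  set K := max x.length y.length with hK
  apply regular_of_bounded_drop
    (fun z => (occCount y z : ℤ) - occCount x z) K
    (fun b a => (if y <:+ b ++ [a] then 1 else 0) - (if x <:+ b ++ [a] then 1 else 0))
    0 (x.length + 1)
  · rw [occCount_nil hx, occCount_nil hy]
    simp
  · omega
  · positivity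
  · intro z a
    have hby : y <:+ z ++ [a] ↔ y <:+ buf K z ++ [a] := suffix_buf_iff a (by omega)
    have hbx : x <:+ z ++ [a] ↔ x <:+ buf K z ++ [a] := suffix_buf_iff a (by omega)
    rw [occCount_append_singleton hx z a, occCount_append_singleton hy z a]
    simp only [← hby, ← hbx]
    split_ifs <;> push_cast <;> ring
  · intro z w
    exact diff_drop_bound hx hy h z w

theorem isRegular_compl {α : Type} {L : Language α} (h : Language.IsRegular L) :
    Language.IsRegular {z | z ∉ L} := by
  obtain ⟨σ, fin, M, rfl⟩ := h
  refine ⟨σ, fin, ⟨M.step, M.start, M.acceptᶜ⟩, ?_⟩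
  ext z
  rw [DFA.mem_accepts]
  show M.eval z ∈ M.acceptᶜ ↔ ¬ (z ∈ M.accepts)
  rw [DFA.mem_accepts]
  exact Iff.rfl

theorem regular_of_interlaced_or {α : Type} [Fintype α] [DecidableEq α]
    {x y : List α} (hx : x ≠ []) (hy : y ≠ [])
    (h : InterlacedBy x y ∨ InterlacedBy y x) :
    Language.IsRegular ({z : List α | occCount x z < occCount y z} : Language α) := by
  rcases h with h | h
  · have heq : ({z : List α | occCount x z < occCount y z} : Language α)
        = {z : List α | 0 < (occCount y z : ℤ) - occCount x z} := by
      ext z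
      simp only [Set.mem_setOf_eq]
      omega
    rw [heq]
    exact regular_of_interlaced hx hy h
  · classical
    set K := max x.length y.length with hK
    have hreg : Language.IsRegular {z : List α | 0 < 1 + (occCount x z : ℤ) - occCount y z} := by
      apply regular_of_bounded_drop
        (fun z => 1 + (occCount x z : ℤ) - occCount y z) K
        (fun b a => (if x <:+ b ++ [a] then 1 else 0) - (if y <:+ b ++ [a] then 1 else 0))
        1 (y.length + 1)
      · rw [occCount_nil hx, occCount_nil hy]
        simp
      · omega
      · positivity
      · intro z a
        have hby : y <:+ z ++ [a] ↔ y <:+ buf K z ++ [a] := suffix_buf_iff a (by omega)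
        have hbx : x <:+ z ++ [a] ↔ x <:+ buf K z ++ [a] := suffix_buf_iff a (by omega)
        rw [occCount_append_singleton hx z a, occCount_append_singleton hy z a]
        simp only [← hby, ← hbx]
        split_ifs <;> push_cast <;> ring
      · intro z w
        have := diff_drop_bound hy hx h z w
        omega
    have heq : ({z : List α | occCount x z < occCount y z} : Language α)
        = {z | z ∉ {z : List α | 0 < 1 + (occCount x z : ℤ) - occCount y z}} := by
      ext z
      simp only [Set.mem_setOf_eq, not_lt]
      omega
    rw [heq]
    exact isRegular_compl hreg

/-! ### Pumping words -/

theorem wpow_zero (w : List α) : wpow w 0 = [] := rfl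

theorem wpow_succ (w : List α) (k : ℕ) : wpow w (k+1) = w ++ wpow w k := by
  simp [wpow, List.replicate_succ]

theorem wpow_length (w : List α) (k : ℕ) : (wpow w k).length = k * w.length := by
  induction k with
  | zero => simp [wpow_zero]
  | succ k ih =>
    rw [wpow_succ]
    simp only [List.length_append, ih]
    ring

theorem wpow_add (w : List α) (i j : ℕ) : wpow w (i+j) = wpow w i ++ wpow w j := by
  induction i with
  | zero => simp [wpow_zero]
  | succ i ih =>
    have : i + 1 + j = (i + j) + 1 := by omega
    rw [this, wpow_succ, ih, wpow_succ, List.append_assoc]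

theorem pump_comm {a x b : List α} (h : a ++ x = x ++ b) (k : ℕ) :
    wpow a k ++ x = x ++ wpow b k := by
  induction k with
  | zero => simp [wpow_zero]
  | succ k ih =>
    rw [wpow_succ, wpow_succ, List.append_assoc, ih, ← List.append_assoc, h,
      List.append_assoc]

theorem pump_prefix {a x b : List α} (h : a ++ x = x ++ b) (k : ℕ) :
    x <+: wpow a k ++ x := ⟨wpow b k, (pump_comm h k).symm⟩

theorem pump_drop {a x : List α} {j k : ℕ} (hjk : j ≤ k) :
    (wpow a k ++ x).drop (j * a.length) = wpow a (k - j) ++ x := by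
  have h1 : wpow a k = wpow a j ++ wpow a (k - j) := by
    rw [← wpow_add]
    congr 1
    omega
  rw [h1, List.append_assoc, ← wpow_length, List.drop_left]

theorem pump_z1_prefix {a x b : List α} (h : a ++ x = x ++ b) {j k : ℕ} (hjk : j + 1 ≤ k) :
    a ++ x <+: (wpow a k ++ x).drop (j * a.length) := by
  rw [pump_drop (by omega)]
  have h1 : k - j = (k - j - 1) + 1 := by omega
  rw [h1, wpow_succ, List.append_assoc, pump_comm h, ← List.append_assoc]
  exact ⟨wpow b (k - j - 1), rfl⟩

theorem occCount_le_total (w u : List α) : occCount w u ≤ u.length + 1 := by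
  rw [occCount_eq]
  calc (occSet w u).card ≤ (Finset.range (u.length + 1)).card :=
        Finset.card_le_card (Finset.filter_subset _ _)
    _ = u.length + 1 := Finset.card_range _

theorem occCount_self {y : List α} (hy : y ≠ []) : occCount y y = 1 := by
  rw [occCount_eq]
  have : occSet y y = {0} := by
    ext i
    simp only [Finset.mem_singleton]
    constructor
    · intro h
      have := occ_bound hy h
      have : 1 ≤ y.length := List.length_pos_iff.2 hy
      omega
    · rintro rfl
      rw [occ_mem_iff hy, List.drop_zero]
  rw [this, Finset.card_singleton]

theorem pump_free {x y a b : List α} (hx : x ≠ []) (hy : y ≠ [])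
    (ha : a ++ x = x ++ b) (hane : a ≠ [])
    (hfree : ¬ y <:+: a ++ x) (hxy : ¬ x <:+: y) (k : ℕ) :
    occCount y (wpow a k ++ x) = 0 := by
  set A := wpow a k ++ x with hA
  have hlenA : A.length = k * a.length + x.length := by
    simp [hA, wpow_length]
  have hla : 1 ≤ a.length := List.length_pos_iff.2 hane
  rw [occCount_eq, Finset.card_eq_zero, Finset.eq_empty_iff_forall_notMem]
  intro q hq
  have hocc : y <+: A.drop q := (occ_mem_iff hy).1 hq
  have hbound : q + y.length ≤ k * a.length + x.length := by
    have := occ_bound hy hq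
    omega
  have hxat : ∀ j, j ≤ k → x <+: A.drop (j * a.length) := by
    intro j hj
    rw [hA, pump_drop hj]
    exact pump_prefix ha _
  have hshift : ∀ j, j + 1 ≤ k → j * a.length ≤ q →
      q + y.length ≤ j * a.length + (a.length + x.length) → False := by
    intro j hj1 hj2 hj3
    apply hfree
    have hz1 : a ++ x <+: A.drop (j * a.length) := pump_z1_prefix ha hj1
    have hlz1 : (a ++ x).length = a.length + x.length := List.length_append
    exact infix_of_nested hz1 hocc hj2 (by rw [hlz1]; omega)
  rcases Nat.eq_zero_or_pos k with rfl | hk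
  · apply hfree
    have h0 : y <:+: x := by
      apply infix_of_nested (hxat 0 (le_refl 0)) hocc (by omega)
      simpa using hbound
    have hsx : x <:+ a ++ x := ⟨a, rfl⟩
    exact h0.trans hsx.isInfix
  · set d := q / a.length with hd
    have hdq : d * a.length ≤ q := Nat.div_mul_le_self q a.length
    have hqd : q < (d + 1) * a.length := by
      have h1 : q / a.length < d + 1 := by omega
      exact (Nat.div_lt_iff_lt_mul (by omega)).1 h1
    rcases le_or_gt k d with hkd | hdk
    · apply hshift (k - 1) (by omega) ?_ ?_
      · have : k * a.length ≤ d * a.length := Nat.mul_le_mul_right _ hkd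
        have hk1 : (k - 1) * a.length + a.length = k * a.length := by
          have h2 : k - 1 + 1 = k := by omega
          calc (k-1) * a.length + a.length = ((k-1) + 1) * a.length := by ring
            _ = k * a.length := by rw [h2]
        omega
      · have hk1 : (k - 1) * a.length + a.length = k * a.length := by
          have h2 : k - 1 + 1 = k := by omega
          calc (k-1) * a.length + a.length = ((k-1) + 1) * a.length := by ring
            _ = k * a.length := by rw [h2]
        omega
    · rcases le_or_gt (q + y.length) (d * a.length + (a.length + x.length)) with hc | hc
      · exact hshift d (by omega) hdq hc
      · apply hxy
        have hxo : x <+: A.drop ((d+1) * a.length) := hxat (d+1) (by omega)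
        apply infix_of_nested hocc hxo (by omega)
        have : (d+1) * a.length = d * a.length + a.length := by ring
        omega

theorem int_of_infix {x y : List α} (h : y <:+: x) : InterlacedBy x y :=
  fun _ hz => h.trans hz.2.1.isInfix

theorem not_regular {x y : List α}
    (hx : x ≠ []) (hy : y ≠ [])
    (hnx : ¬ InterlacedBy x y) (hny : ¬ InterlacedBy y x)
    {σ : Type} (M : DFA α σ) (hfin : Fintype σ) :
    M.accepts ≠ ({z : List α | occCount x z < occCount y z} : Language α) := by
  classical
  have hxy : ¬ x <:+: y := fun h => hny (int_of_infix h)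
  have hyx : ¬ y <:+: x := fun h => hnx (int_of_infix h)
  rw [InterlacedBy] at hnx hny
  push_neg at hnx hny
  obtain ⟨z1, hb1, hf1⟩ := hnx
  obtain ⟨z2, hb2, hf2⟩ := hny
  obtain ⟨hne1, hp1, hs1⟩ := hb1
  obtain ⟨hne2, hp2, hs2⟩ := hb2
  obtain ⟨a, ha⟩ := hs1
  obtain ⟨b, hbx⟩ := hp1
  obtain ⟨g, hg⟩ := hs2
  obtain ⟨dd, hdy⟩ := hp2
  have hax : a ++ x = x ++ b := ha.trans hbx.symm
  have hgy : g ++ y = y ++ dd := hg.trans hdy.symm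
  have hane : a ≠ [] := by
    intro h0
    apply hne1
    rw [← ha, h0, List.nil_append]
  have hgne : g ≠ [] := by
    intro h0
    apply hne2
    rw [← hg, h0, List.nil_append]
  have hla : 1 ≤ a.length := List.length_pos_iff.2 hane
  have hlg : 1 ≤ g.length := List.length_pos_iff.2 hgne
  have hm1 : 1 ≤ x.length := List.length_pos_iff.2 hx
  have hn1 : 1 ≤ y.length := List.length_pos_iff.2 hy
  have hfree1 : ¬ y <:+: a ++ x := by rw [ha]; exact hf1
  have hfree2 : ¬ x <:+: g ++ y := by rw [hg]; exact hf2
  set A : ℕ → List α := fun k => wpow a k ++ x with hA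
  set Bw : ℕ → List α := fun l => wpow g l ++ y with hB
  set X : ℕ → ℕ := fun k => occCount x (A k) with hX
  set Y : ℕ → ℕ := fun l => occCount y (Bw l) with hY
  have hAy : ∀ k, occCount y (A k) = 0 := fun k => pump_free hx hy hax hane hfree1 hxy k
  have hBx : ∀ l, occCount x (Bw l) = 0 := fun l => pump_free hy hx hgy hgne hfree2 hyx l
  have hXlb : ∀ k, k + 1 ≤ X k := by
    intro k
    have hcard : (Finset.range (k+1)).card ≤ (occSet x (A k)).card := by
      apply Finset.card_le_card_of_injOn (fun j => j * a.length)
      · intro j hj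
        rw [Finset.mem_coe, occ_mem_iff hx]
        have hjk : j ≤ k := by
          have := Finset.mem_range.1 hj
          omega
        show x <+: (wpow a k ++ x).drop (j * a.length)
        rw [pump_drop hjk]
        exact pump_prefix hax _
      · intro p _ q _ h
        exact Nat.eq_of_mul_eq_mul_right (by omega) h
    rw [Finset.card_range] at hcard
    exact hcard.trans (le_of_eq (occCount_eq x (A k)).symm)
  have hYlb : ∀ l, l + 1 ≤ Y l := by
    intro l
    have hcard : (Finset.range (l+1)).card ≤ (occSet y (Bw l)).card := by
      apply Finset.card_le_card_of_injOn (fun j => j * g.length)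
      · intro j hj
        rw [Finset.mem_coe, occ_mem_iff hy]
        have hjk : j ≤ l := by
          have := Finset.mem_range.1 hj
          omega
        show y <+: (wpow g l ++ y).drop (j * g.length)
        rw [pump_drop hjk]
        exact pump_prefix hgy _
      · intro p _ q _ h
        exact Nat.eq_of_mul_eq_mul_right (by omega) h
    rw [Finset.card_range] at hcard
    exact hcard.trans (le_of_eq (occCount_eq y (Bw l)).symm)
  have hXub : ∀ k, X k ≤ k * a.length + x.length + 1 := by
    intro k
    have h1 := occCount_le_total x (A k)
    have h2 : (A k).length = k * a.length + x.length := by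
      show (wpow a k ++ x).length = _
      rw [List.length_append, wpow_length]
    rw [h2] at h1
    exact h1
  have hXmono : Monotone X := by
    apply monotone_nat_of_le_succ
    intro k
    have h1 : A (k+1) = a ++ A k := by
      show wpow a (k+1) ++ x = a ++ (wpow a k ++ x)
      rw [wpow_succ, List.append_assoc]
    show occCount x (A k) ≤ occCount x (A (k+1))
    rw [h1]
    exact occCount_suffix_le hx a (A k)
  have hYstep : ∀ l, Y (l+1) ≤ Y l + (occCount y g + y.length) := by
    intro l
    have h1 : Bw (l+1) = g ++ Bw l := by
      show wpow g (l+1) ++ y = g ++ (wpow g l ++ y)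
      rw [wpow_succ, List.append_assoc]
    have hb1 : Y (l+1) = occCount y (Bw (l+1)) := rfl
    have hb0 : Y l = occCount y (Bw l) := rfl
    rw [h1] at hb1
    have h2 := occCount_append_le hy g (Bw l)
    omega
  have hY0 : Y 0 = 1 := by
    show occCount y (Bw 0) = 1
    have h1 : Bw 0 = y := by
      show wpow g 0 ++ y = y
      rw [wpow_zero, List.nil_append]
    rw [h1]
    exact occCount_self hy
  set G := occCount y g + y.length with hG
  set D := x.length + y.length + G with hD
  intro hM
  set f : ℕ → ℕ := fun i => Nat.rec 0 (fun _ p => p * a.length + x.length + D + 1) i with hf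
  have hfs : ∀ i, f (i+1) = f i * a.length + x.length + D + 1 := fun i => rfl
  have hfmono : Monotone f := by
    apply monotone_nat_of_le_succ
    intro i
    have h1 : f i * 1 ≤ f i * a.length := Nat.mul_le_mul_left _ hla
    rw [hfs]
    omega
  have hXgap : ∀ i, X (f i) + D ≤ X (f (i+1)) := by
    intro i
    have h1 := hXlb (f (i+1))
    have h2 := hXub (f i)
    have h3 : f i * a.length + x.length + D + 1 ≤ f (i+1) := le_of_eq (hfs i).symm
    omega
  haveI := hfin
  have key : ∀ i j, i < j → M.eval (A (f i)) = M.eval (A (f j)) → False := by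
    intro i j hlt hev
    set k := f i with hk
    set k' := f j with hk'
    have hgap : X k + D ≤ X k' := by
      calc X k + D ≤ X (f (i+1)) := hXgap i
        _ ≤ X k' := hXmono (hfmono (Nat.succ_le_of_lt hlt))
    have hex : ∃ l, X k + x.length + 1 ≤ Y l := by
      refine ⟨X k + x.length, ?_⟩
      have := hYlb (X k + x.length)
      omega
    set l := Nat.find hex with hl
    have hfind : X k + x.length + 1 ≤ Y l := Nat.find_spec hex
    have hlpos : l ≠ 0 := by
      intro h0
      rw [h0, hY0] at hfind
      have := hXlb k
      omega
    have hprev : ¬ (X k + x.length + 1 ≤ Y (l - 1)) := Nat.find_min hex (by omega)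
    have hYub : Y l ≤ X k + x.length + G := by
      have h1 := hYstep (l-1)
      have h2 : l - 1 + 1 = l := by omega
      rw [h2] at h1
      omega
    set w := Bw l with hw
    have m1 : occCount x (A k ++ w) < occCount y (A k ++ w) := by
      have hxle := occCount_append_le hx (A k) w
      rw [hBx l] at hxle
      have hyge : occCount y w ≤ occCount y (A k ++ w) := occCount_suffix_le hy (A k) w
      have hYw : occCount y w = Y l := rfl
      have hXk : occCount x (A k) = X k := rfl
      omega
    have m2 : ¬ (occCount x (A k' ++ w) < occCount y (A k' ++ w)) := by
      push_neg
      have hyle := occCount_append_le hy (A k') w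
      rw [hAy k'] at hyle
      have hxge : occCount x (A k') ≤ occCount x (A k' ++ w) := occCount_prefix_le hx (A k') w
      have hYw : occCount y w = Y l := rfl
      have hXk : occCount x (A k') = X k' := rfl
      omega
    have hacc1 : A k ++ w ∈ M.accepts := by
      rw [hM]
      exact m1
    have hacc2 : A k' ++ w ∉ M.accepts := by
      rw [hM]
      exact m2
    apply hacc2
    rw [DFA.mem_accepts] at hacc1 ⊢
    have e1 : M.eval (A k' ++ w) = M.evalFrom (M.eval (A k')) w :=
      M.evalFrom_of_append _ _ _
    have e2 : M.eval (A k ++ w) = M.evalFrom (M.eval (A k)) w :=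
      M.evalFrom_of_append _ _ _
    rw [e1, ← hev, ← e2]
    exact hacc1
  obtain ⟨i, j, hij, hevij⟩ := Finite.exists_ne_map_eq_of_infinite (fun i => M.eval (A (f i)))
  rcases lt_or_gt_of_ne hij with hlt | hlt
  · exact key i j hlt hevij
  · exact key j i hlt hevij.symm

end Aux


theorem stmt_6 {α : Type} [Fintype α] [DecidableEq α] (x y : List α)
    (hx : x ≠ []) (hy : y ≠ []) :
    Language.IsRegular ({z : List α | occCount x z < occCount y z} : Language α) ↔
      InterlacedBy x y ∨ InterlacedBy y x := by
  constructor
  · intro hreg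
    by_contra hc
    push_neg at hc
    obtain ⟨σ, fin, M, hM⟩ := hreg
    exact Aux.not_regular hx hy hc.1 hc.2 M fin hM
  · exact Aux.regular_of_interlaced_or hx hy
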